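/- Let R be a commutative ring, I a nilpotent ideal of R (I^e = (0) for some e ≥ 1), and n ≥ 1. Then TJC(R,I,n) holds if and only if JC(R,n) holds. -/

import Mathlib

open MvPowerSeries

/-- Membership in the Tate algebra `(R,I)⟨X_1,…,X_n⟩`: for every `k ≥ 1`, all but finitely
many coefficients lie in `I ^ k`. -/
def TateMem {n : ℕ} {R : Type*} [CommRing R] (I : Ideal R)
    (f : MvPowerSeries (Fin n) R) : Prop :=
  ∀ k : ℕ, 1 ≤ k → {d : Fin n →₀ ℕ | MvPowerSeries.coeff d f ∉ I ^ k}.Finite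

/-- The formal partial derivative of a multivariate power series with respect to `X j`. -/
noncomputable def psDeriv {n : ℕ} {R : Type*} [CommRing R] (j : Fin n)
    (f : MvPowerSeries (Fin n) R) : MvPowerSeries (Fin n) R :=
  fun d => (d j + 1 : ℕ) * MvPowerSeries.coeff (d + Finsupp.single j 1) f

/-- Substitution of the power series `G j` for the variables `X j` in `f`
(the intended use is when each `G j` has zero constant coefficient, in which case
the `finsum` below is a finite sum for each fixed monomial). -/
noncomputable def psSubst {n : ℕ} {R : Type*} [CommRing R]
    (G : Fin n → MvPowerSeries (Fin n) R) (f : MvPowerSeries (Fin n) R) :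
    MvPowerSeries (Fin n) R :=
  fun e => ∑ᶠ d : Fin n →₀ ℕ,
    MvPowerSeries.coeff d f * MvPowerSeries.coeff e (∏ j, G j ^ d j)

/-- `f` is a unit of the Tate algebra `(R,I)⟨X_1,…,X_n⟩`. -/
def TateUnit {n : ℕ} {R : Type*} [CommRing R] (I : Ideal R)
    (f : MvPowerSeries (Fin n) R) : Prop :=
  TateMem I f ∧ ∃ g, TateMem I g ∧ f * g = 1

/-- The Jacobian conjecture `JC(R,n)`. -/
def JC (R : Type*) [CommRing R] (n : ℕ) : Prop :=
  ∀ F : Fin n → MvPolynomial (Fin n) R,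
    IsUnit (Matrix.det (Matrix.of fun i j => MvPolynomial.pderiv j (F i))) →
    ∃ G : Fin n → MvPolynomial (Fin n) R,
      (∀ i, MvPolynomial.bind₁ G (F i) = MvPolynomial.X i) ∧
      (∀ i, MvPolynomial.bind₁ F (G i) = MvPolynomial.X i)

/-- The Tate-Jacobian conjecture `TJC(R,I,n)`. -/
def TJC (R : Type*) [CommRing R] (I : Ideal R) (n : ℕ) : Prop :=
  ∀ F : Fin n → MvPowerSeries (Fin n) R,
    (∀ i, TateMem I (F i)) →
    (∀ i, MvPowerSeries.constantCoeff (F i) = 0) →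
    TateUnit I (Matrix.det (Matrix.of fun i j => psDeriv j (F i))) →
    ∃ G : Fin n → MvPowerSeries (Fin n) R,
      (∀ i, TateMem I (G i)) ∧
      (∀ i, MvPowerSeries.constantCoeff (G i) = 0) ∧
      (∀ i, psSubst G (F i) = MvPowerSeries.X i) ∧
      (∀ i, psSubst F (G i) = MvPowerSeries.X i)

section Aux

variable {n : ℕ} {R : Type*} [CommRing R]

lemma tateMem_coe (I : Ideal R) (p : MvPolynomial (Fin n) R) :
    TateMem I (↑p : MvPowerSeries (Fin n) R) := by
  intro k _
  apply Set.Finite.subset p.support.finite_toSet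
  intro d hd
  simp only [Set.mem_setOf_eq, MvPolynomial.coeff_coe] at hd
  by_contra h
  rw [MvPolynomial.notMem_support_iff.mp (by simpa using h)] at hd
  exact hd (zero_mem _)

lemma exists_poly (I : Ideal R) (e : ℕ) (he : 1 ≤ e) (hIe : I ^ e = ⊥)
    {f : MvPowerSeries (Fin n) R} (hf : TateMem I f) :
    ∃ p : MvPolynomial (Fin n) R, f = ↑p := by
  have h := hf e he
  rw [hIe] at h
  have hsupp : (Function.support fun d => MvPowerSeries.coeff d f).Finite := by
    have : (Function.support fun d => MvPowerSeries.coeff d f)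
        = {d : Fin n →₀ ℕ | MvPowerSeries.coeff d f ∉ (⊥ : Ideal R)} := by
      ext d; simp [Ideal.mem_bot]
    rw [this]; exact h
  refine ⟨∑ d ∈ hsupp.toFinset, MvPolynomial.monomial d (MvPowerSeries.coeff d f), ?_⟩
  ext d
  rw [MvPolynomial.coeff_coe, MvPolynomial.coeff_sum]
  simp only [MvPolynomial.coeff_monomial]
  rw [Finset.sum_ite_eq' hsupp.toFinset d (fun d' => MvPowerSeries.coeff d' f)]
  split_ifs with hd
  · rfl
  · symm
    by_contra h'
    exact hd (by simp [Function.mem_support]; exact fun hh => h' hh.symm)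

lemma coeff_psDeriv (j : Fin n) (f : MvPowerSeries (Fin n) R) (d : Fin n →₀ ℕ) :
    MvPowerSeries.coeff d (psDeriv j f) =
      (d j + 1 : ℕ) * MvPowerSeries.coeff (d + Finsupp.single j 1) f := rfl

lemma psDeriv_coe (j : Fin n) (p : MvPolynomial (Fin n) R) :
    psDeriv j (↑p : MvPowerSeries (Fin n) R) = ↑(MvPolynomial.pderiv j p) := by
  induction p using MvPolynomial.induction_on' with
  | add p q hp hq =>
    ext d
    rw [coeff_psDeriv]
    push_cast [map_add]
    have hp' := congrFun hp d
    have hq' := congrFun hq d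
    have hp'' : ((d j + 1 : ℕ) : R) * MvPolynomial.coeff (d + Finsupp.single j 1) p
        = MvPolynomial.coeff d (MvPolynomial.pderiv j p) := hp'
    have hq'' : ((d j + 1 : ℕ) : R) * MvPolynomial.coeff (d + Finsupp.single j 1) q
        = MvPolynomial.coeff d (MvPolynomial.pderiv j q) := hq'
    push_cast at hp'' hq''
    rw [mul_add, hp'', hq'']
  | monomial d' a =>
    ext d
    rw [coeff_psDeriv, MvPolynomial.pderiv_monomial]
    push_cast
    rw [MvPowerSeries.coeff_monomial, MvPowerSeries.coeff_monomial]
    by_cases h : d + Finsupp.single j 1 = d'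
    · have h1 : d = d' - Finsupp.single j 1 := by
        rw [← h]; exact (add_tsub_cancel_right _ _).symm
      have h2 : d' j = d j + 1 := by
        rw [← h]; simp [Finsupp.add_apply]
      rw [if_pos h, if_pos h1, h2]
      push_cast
      ring
    · rw [if_neg h]
      by_cases h1 : d = d' - Finsupp.single j 1
      · rw [if_pos h1]
        have hdj : d' j = 0 := by
          by_contra hdj
          apply h
          rw [h1]
          ext a
          by_cases ha : a = j
          · subst ha
            simp [Finsupp.tsub_apply, Finsupp.add_apply]
            omega
          · simp [Finsupp.tsub_apply, Finsupp.add_apply, Finsupp.single_eq_of_ne ha]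
        rw [hdj]
        simp
      · rw [if_neg h1]; simp

lemma psSubst_coe (g : Fin n → MvPolynomial (Fin n) R) (p : MvPolynomial (Fin n) R) :
    psSubst (fun j => (↑(g j) : MvPowerSeries (Fin n) R)) ↑p = ↑(MvPolynomial.bind₁ g p) := by
  funext e
  show (∑ᶠ d : Fin n →₀ ℕ, MvPowerSeries.coeff d ↑p *
      MvPowerSeries.coeff e (∏ j, (↑(g j) : MvPowerSeries (Fin n) R) ^ d j))
    = MvPowerSeries.coeff e ↑(MvPolynomial.bind₁ g p)
  rw [finsum_eq_finset_sum_of_support_subset _ (s := p.support) (by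
    intro d hd
    simp only [Function.mem_support, Ne, Finset.mem_coe] at hd ⊢
    by_contra hds
    rw [MvPolynomial.coeff_coe, MvPolynomial.notMem_support_iff.mp hds, zero_mul] at hd
    exact hd rfl)]
  have hb : MvPolynomial.bind₁ g p
      = ∑ d ∈ p.support, MvPolynomial.C (MvPolynomial.coeff d p) * ∏ i, g i ^ d i := by
    rw [MvPolynomial.bind₁, MvPolynomial.aeval_def, MvPolynomial.eval₂_eq' (algebraMap R _) g p]
    rfl
  rw [hb, MvPolynomial.coeff_coe, MvPolynomial.coeff_sum]
  apply Finset.sum_congr rfl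
  intro d _
  rw [MvPolynomial.coeff_C_mul]
  congr 1
  have hprod : ((∏ i, g i ^ d i : MvPolynomial (Fin n) R) : MvPowerSeries (Fin n) R)
      = ∏ j, (↑(g j) : MvPowerSeries (Fin n) R) ^ d j := by
    rw [← MvPolynomial.coeToMvPowerSeries.ringHom_apply, map_prod]
    simp [map_pow, MvPolynomial.coeToMvPowerSeries.ringHom_apply]
  rw [← hprod, MvPolynomial.coeff_coe]

lemma tateUnit_coe_iff (I : Ideal R) (e : ℕ) (he : 1 ≤ e) (hIe : I ^ e = ⊥)
    (p : MvPolynomial (Fin n) R) :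
    TateUnit I (↑p : MvPowerSeries (Fin n) R) ↔ IsUnit p := by
  constructor
  · rintro ⟨-, g, hg, hmul⟩
    obtain ⟨q, rfl⟩ := exists_poly I e he hIe hg
    rw [← MvPolynomial.coe_mul, MvPolynomial.coe_eq_one_iff] at hmul
    exact IsUnit.of_mul_eq_one _ hmul
  · rintro hp
    obtain ⟨q, hq⟩ := hp.exists_right_inv
    exact ⟨tateMem_coe I p, ↑q, tateMem_coe I q,
      by rw [← MvPolynomial.coe_mul, hq, MvPolynomial.coe_one]⟩

lemma det_psDeriv_coe (p : Fin n → MvPolynomial (Fin n) R) :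
    (Matrix.det (Matrix.of fun i j => psDeriv j (↑(p i) : MvPowerSeries (Fin n) R)))
      = ↑(Matrix.det (Matrix.of fun i j => MvPolynomial.pderiv j (p i))) := by
  have hmd := RingHom.map_det MvPolynomial.coeToMvPowerSeries.ringHom
    (Matrix.of fun i j => MvPolynomial.pderiv j (p i))
  rw [← MvPolynomial.coeToMvPowerSeries.ringHom_apply, hmd]
  congr 1
  refine Matrix.ext fun i j => ?_
  simp [Matrix.map_apply, MvPolynomial.coeToMvPowerSeries.ringHom_apply, psDeriv_coe]

lemma constantCoeff_coe (p : MvPolynomial (Fin n) R) :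
    MvPowerSeries.constantCoeff (↑p : MvPowerSeries (Fin n) R)
      = MvPolynomial.constantCoeff p := rfl

lemma constantCoeff_bind₁' (F : Fin n → MvPolynomial (Fin n) R)
    (hF : ∀ i, MvPolynomial.constantCoeff (F i) = 0) (q : MvPolynomial (Fin n) R) :
    MvPolynomial.constantCoeff (MvPolynomial.bind₁ F q) = MvPolynomial.constantCoeff q := by
  have h1 : MvPolynomial.constantCoeff (MvPolynomial.bind₁ F q)
      = MvPolynomial.eval (0 : Fin n → R) (MvPolynomial.bind₁ F q) := by
    rw [MvPolynomial.eval_zero]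
  rw [h1]
  have h2 : MvPolynomial.eval (0 : Fin n → R) (MvPolynomial.bind₁ F q)
      = MvPolynomial.eval (fun i => MvPolynomial.eval (0 : Fin n → R) (F i)) q := by
    exact MvPolynomial.eval₂Hom_bind₁ (RingHom.id R) (0 : Fin n → R) F q
  rw [h2]
  have h3 : (fun i => MvPolynomial.eval (0 : Fin n → R) (F i)) = (0 : Fin n → R) := by
    funext i
    have := hF i
    rw [← MvPolynomial.eval_zero] at this
    simpa using this
  rw [h3, MvPolynomial.eval_zero]

end Aux

/-- If `I` is a nilpotent ideal of `R`, then `TJC(R,I,n)` is equivalent to `JC(R,n)`. -/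
theorem stmt_16 (R : Type*) [CommRing R] (I : Ideal R) (e : ℕ) (he : 1 ≤ e)
    (hIe : I ^ e = ⊥) (n : ℕ) (hn : 1 ≤ n) :
    TJC R I n ↔ JC R n := by
  constructor
  · -- TJC → JC
    intro htjc F hdet
    -- translate F so that its constant term vanishes
    set c : Fin n → R := fun i => MvPolynomial.constantCoeff (F i) with hc
    set F' : Fin n → MvPolynomial (Fin n) R :=
      fun i => F i - MvPolynomial.C (c i) with hF'
    have hderiv : ∀ i j, MvPolynomial.pderiv j (F' i) = MvPolynomial.pderiv j (F i) := by
      intro i j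
      simp [hF', map_sub, MvPolynomial.pderiv_C]
    have hdet' : Matrix.det (Matrix.of fun i j => MvPolynomial.pderiv j (F' i))
        = Matrix.det (Matrix.of fun i j => MvPolynomial.pderiv j (F i)) := by
      congr 1; exact Matrix.ext fun i j => hderiv i j
    obtain ⟨G, hGmem, hGc, hGF, hFG⟩ := htjc (fun i => ↑(F' i))
      (fun i => tateMem_coe I _)
      (fun i => by
        rw [constantCoeff_coe]
        simp [hF', map_sub, hc])
      (by
        rw [det_psDeriv_coe, tateUnit_coe_iff I e he hIe, hdet']
        exact hdet)
    choose g hg using fun i => exists_poly I e he hIe (hGmem i)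
    have hGeq : G = fun i => (↑(g i) : MvPowerSeries (Fin n) R) := funext hg
    rw [hGeq] at hGF hFG
    have hgF : ∀ i, MvPolynomial.bind₁ g (F' i) = MvPolynomial.X i := by
      intro i
      have := hGF i
      rw [psSubst_coe, ← MvPolynomial.coe_X] at this
      exact MvPolynomial.coe_inj.mp this
    have hFg : ∀ i, MvPolynomial.bind₁ F' (g i) = MvPolynomial.X i := by
      intro i
      have := hFG i
      rw [psSubst_coe, ← MvPolynomial.coe_X] at this
      exact MvPolynomial.coe_inj.mp this
    -- translate back
    set T : Fin n → MvPolynomial (Fin n) R :=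
      fun j => MvPolynomial.X j - MvPolynomial.C (c j) with hT
    refine ⟨fun i => MvPolynomial.bind₁ T (g i), ?_, ?_⟩
    · intro i
      have hFi : F i = F' i + MvPolynomial.C (c i) := by simp [hF']
      rw [hFi, map_add, MvPolynomial.bind₁_C_right]
      have : MvPolynomial.bind₁ (fun i => MvPolynomial.bind₁ T (g i)) (F' i)
          = MvPolynomial.bind₁ T (MvPolynomial.bind₁ g (F' i)) :=
        (MvPolynomial.bind₁_bind₁ g T (F' i)).symm
      rw [this, hgF i, MvPolynomial.bind₁_X_right, hT]
      ring
    · intro i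
      have : MvPolynomial.bind₁ F (MvPolynomial.bind₁ T (g i))
          = MvPolynomial.bind₁ (fun j => MvPolynomial.bind₁ F (T j)) (g i) :=
        MvPolynomial.bind₁_bind₁ T F (g i)
      rw [this]
      have hFT : (fun j => MvPolynomial.bind₁ F (T j)) = F' := by
        funext j
        simp [hT, hF', map_sub, MvPolynomial.bind₁_X_right, MvPolynomial.bind₁_C_right]
      rw [hFT, hFg i]
  · -- JC → TJC
    intro hjc F hFmem hFc hFdet
    choose p hp using fun i => exists_poly I e he hIe (hFmem i)
    have hFeq : F = fun i => (↑(p i) : MvPowerSeries (Fin n) R) := funext hp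
    subst hFeq
    have hpc : ∀ i, MvPolynomial.constantCoeff (p i) = 0 := by
      intro i
      have := hFc i
      rwa [constantCoeff_coe] at this
    have hdet : IsUnit (Matrix.det (Matrix.of fun i j => MvPolynomial.pderiv j (p i))) := by
      rw [det_psDeriv_coe, tateUnit_coe_iff I e he hIe] at hFdet
      exact hFdet
    obtain ⟨G, hGp, hpG⟩ := hjc p hdet
    have hGc : ∀ i, MvPolynomial.constantCoeff (G i) = 0 := by
      intro i
      have := congrArg MvPolynomial.constantCoeff (hpG i)
      rw [constantCoeff_bind₁' p hpc (G i)] at this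
      simpa using this
    refine ⟨fun i => ↑(G i), fun i => tateMem_coe I _, fun i => by
      rw [constantCoeff_coe]; exact hGc i, ?_, ?_⟩
    · intro i
      rw [psSubst_coe, hGp i, MvPolynomial.coe_X]
    · intro i
      rw [psSubst_coe, hpG i, MvPolynomial.coe_X]
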